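/- There is an M_0 > 0 such that for every real M ≥ M_0 the following holds. Let {X_i}_{i≥1} be i.i.d. positive-integer-valued random variables with weights W_n = X_1 + ... + X_n, and for a positive integer n let L_n = {max(X_1,...,X_n) ≤ n/M}, T_n = max{i : W_i ≤ n}, R_i = n - W_{T_n} + X_{T_n} + ... + X_{T_n - i + 1} for 1 ≤ i ≤ T_n, and for a nonnegative integer b < n and 1 ≤ i ≤ T_{n-b} let W'_{b,i} = W_{T_{n-b}} - W_{T_{n-b} - i}. Then P({W_i : 1 ≤ i ≤ T_n} ∩ {R_i : 1 ≤ i ≤ T_n} ∩ [1, n/3] = ∅) ≤ (E[X] + 1)·P(L_n^c) + Σ_{b=0}^{⌊n/M⌋} P(X ≥ b+1) · P({W_i : 1 ≤ i ≤ T_{n-b}} ∩ {b + W'_{b,i} : 1 ≤ i ≤ T_{n-b}} ∩ [1, n/3] = ∅ and L_n). -/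

import Mathlib

open MeasureTheory ProbabilityTheory
open scoped ENNReal

/-- The condition defining the auxiliary event `G b t`, expressed purely in terms of the
gap sequence `x`. -/
def gapCond (M : ℝ) (n b t : ℕ) (x : ℕ → ℕ) : Prop :=
  (∑ i ∈ Finset.Icc 1 t, x i) + b = n ∧
  (∀ i ∈ Finset.Icc 1 t, ∀ i' ∈ Finset.Icc 1 t,
    ¬((∑ j ∈ Finset.Icc 1 i, x j) = b + ∑ j ∈ Finset.Ioc (t - i') t, x j
      ∧ 1 ≤ ∑ j ∈ Finset.Icc 1 i, x j ∧ 3 * (∑ j ∈ Finset.Icc 1 i, x j) ≤ n)) ∧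
  (∀ i ∈ Finset.Icc 1 n, i ≠ t + 1 → ((x i : ℝ) ≤ (n : ℝ) / M))

lemma gapCond_congr (M : ℝ) (n b t : ℕ) {x y : ℕ → ℕ}
    (hxy : ∀ i, 1 ≤ i → i ≤ max t n → i ≠ t + 1 → x i = y i) :
    gapCond M n b t x ↔ gapCond M n b t y := by
  have hIcc : ∀ m, m ≤ t → ∑ j ∈ Finset.Icc 1 m, x j = ∑ j ∈ Finset.Icc 1 m, y j := by
    intro m hm
    refine Finset.sum_congr rfl fun i hi => ?_
    rw [Finset.mem_Icc] at hi
    exact hxy i hi.1 (le_trans (le_trans hi.2 hm) (le_max_left _ _)) (by omega)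
  have hIoc : ∀ a, ∑ j ∈ Finset.Ioc a t, x j = ∑ j ∈ Finset.Ioc a t, y j := by
    intro a
    refine Finset.sum_congr rfl fun i hi => ?_
    rw [Finset.mem_Ioc] at hi
    exact hxy i (by omega) (le_trans hi.2 (le_max_left _ _)) (by omega)
  constructor
  · rintro ⟨h1, h2, h3⟩
    refine ⟨by rw [← hIcc t le_rfl]; exact h1, ?_, ?_⟩
    · intro i hi i' hi'
      rw [← hIcc i (Finset.mem_Icc.mp hi).2, ← hIoc]
      exact h2 i hi i' hi'
    · intro i hi hne
      rw [← hxy i (Finset.mem_Icc.mp hi).1 (le_trans (Finset.mem_Icc.mp hi).2 (le_max_right _ _))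
        hne]
      exact h3 i hi hne
  · rintro ⟨h1, h2, h3⟩
    refine ⟨by rw [hIcc t le_rfl]; exact h1, ?_, ?_⟩
    · intro i hi i' hi'
      rw [hIcc i (Finset.mem_Icc.mp hi).2, hIoc]
      exact h2 i hi i' hi'
    · intro i hi hne
      rw [hxy i (Finset.mem_Icc.mp hi).1 (le_trans (Finset.mem_Icc.mp hi).2 (le_max_right _ _))
        hne]
      exact h3 i hi hne

/-- Reindexing sum of the last `i'` gaps. -/
lemma sum_range_sub_eq_sum_Ioc (x : ℕ → ℕ) {t i' : ℕ} (h : i' ≤ t) :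
    ∑ j ∈ Finset.range i', x (t - j) = ∑ j ∈ Finset.Ioc (t - i') t, x j := by
  refine Finset.sum_nbij' (fun j => t - j) (fun j => t - j) ?_ ?_ ?_ ?_ ?_
  · intro a ha
    simp only [Finset.mem_range] at ha
    simp only [Finset.mem_Ioc]
    omega
  · intro a ha
    simp only [Finset.mem_Ioc] at ha
    simp only [Finset.mem_range]
    omega
  · intro a ha
    simp only [Finset.mem_range] at ha
    omega
  · intro a ha
    simp only [Finset.mem_Ioc] at ha
    omega
  · intro a _
    rfl

/-- Splitting the sum `W t` as `W (t - i')` plus the last block. -/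
lemma sum_Icc_split (x : ℕ → ℕ) {t i' : ℕ} (h : i' ≤ t) :
    (∑ j ∈ Finset.Icc 1 (t - i'), x j) + ∑ j ∈ Finset.Ioc (t - i') t, x j
      = ∑ j ∈ Finset.Icc 1 t, x j := by
  have h1 : ∀ m : ℕ, Finset.Icc 1 m = Finset.Ioc 0 m := by
    intro m; rw [← Finset.Icc_add_one_left_eq_Ioc]; rfl
  rw [h1, h1]
  exact Finset.sum_Ioc_consecutive _ (Nat.zero_le _) (by omega)

/-- The layer-cake pointwise bound. -/
lemma sum_ite_le (m k : ℕ) :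
    (∑ b ∈ Finset.range m, if b + 1 ≤ k then (1 : ℝ≥0∞) else 0) ≤ (k : ℝ≥0∞) := by
  rw [← Finset.sum_filter]
  simp only [Finset.sum_const, nsmul_eq_mul, mul_one]
  have hsub : (Finset.range m).filter (fun b => b + 1 ≤ k) ⊆ Finset.range k := by
    intro b hb
    simp only [Finset.mem_filter, Finset.mem_range] at hb ⊢
    omega
  have := Finset.card_le_card hsub
  rw [Finset.card_range] at this
  exact_mod_cast this

/-- Lemma 2.1 of the paper: there is an `M₀ > 0` such that for all `M ≥ M₀` and
any i.i.d. positive integer gap sequence with finite mean, the probability that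
`{W i}` and `{R i}` have no common point in `[1, n/3]` is bounded by
`(E X + 1) P(Lₙᶜ) + ∑_{b=0}^{⌊n/M⌋} P(X ≥ b+1) P({W i} ∩ {b + W'_{b,i}} ∩ [1,n/3] = ∅, Lₙ)`. -/
theorem stmt7 :
    ∃ M₀ : ℝ, 0 < M₀ ∧ ∀ M : ℝ, M₀ ≤ M →
    ∀ (Ω : Type) [MeasurableSpace Ω] (μ : Measure Ω), IsProbabilityMeasure μ →
    ∀ (X : ℕ → Ω → ℕ),
      (∀ i, Measurable (X i)) →
      (∀ i ω, 0 < X i ω) →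
      iIndepFun X μ →
      (∀ i, IdentDistrib (X i) (X 1) μ μ) →
      Integrable (fun ω => (X 1 ω : ℝ)) μ →
    ∀ (W : ℕ → Ω → ℕ), (∀ m ω, W m ω = ∑ i ∈ Finset.Icc 1 m, X i ω) →
    ∀ (T : ℕ → Ω → ℕ),
      (∀ m ω, W (T m ω) ω ≤ m ∧ ∀ i, W i ω ≤ m → i ≤ T m ω) →
    ∀ n : ℕ, 1 ≤ n →
    ∀ (R : ℕ → Ω → ℕ),
      (∀ i ω, R i ω = n - W (T n ω) ω + ∑ j ∈ Finset.range i, X (T n ω - j) ω) →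
    ∀ (W' : ℕ → ℕ → Ω → ℕ),
      (∀ b i ω, W' b i ω = W (T (n - b) ω) ω - W (T (n - b) ω - i) ω) →
    μ {ω | ∀ i ∈ Finset.Icc 1 (T n ω), ∀ i' ∈ Finset.Icc 1 (T n ω),
        ¬ (W i ω = R i' ω ∧ 1 ≤ W i ω ∧ 3 * W i ω ≤ n)}
      ≤ ENNReal.ofReal ((∫ ω, (X 1 ω : ℝ) ∂μ) + 1)
          * μ ({ω | ∀ i ∈ Finset.Icc 1 n, (X i ω : ℝ) ≤ (n : ℝ) / M}ᶜ)
        + ∑ b ∈ Finset.range (⌊(n : ℝ) / M⌋₊ + 1),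
            μ {ω | b + 1 ≤ X 1 ω}
              * μ ({ω | ∀ i ∈ Finset.Icc 1 (T (n - b) ω), ∀ i' ∈ Finset.Icc 1 (T (n - b) ω),
                    ¬ (W i ω = b + W' b i' ω ∧ 1 ≤ W i ω ∧ 3 * W i ω ≤ n)}
                  ∩ {ω | ∀ i ∈ Finset.Icc 1 n, (X i ω : ℝ) ≤ (n : ℝ) / M}) := by
  refine ⟨1, one_pos, ?_⟩
  intro M hM Ω _ μ hμ X hXmeas hXpos hXindep hXid hXint W hW T hT n hn R hR W' hW'
  have hM0 : (0 : ℝ) < M := lt_of_lt_of_le one_pos hM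
  -- basic facts about `W` and `T`
  have hWsucc : ∀ m ω, W (m + 1) ω = W m ω + X (m + 1) ω := by
    intro m ω
    rw [hW, hW, Finset.sum_Icc_succ_top (Nat.succ_le_succ (Nat.zero_le m))]
  have hWmono : ∀ ω, StrictMono fun m => W m ω := by
    intro ω
    refine strictMono_nat_of_lt_succ fun m => ?_
    have := hXpos (m + 1) ω
    rw [hWsucc]
    omega
  have hWge : ∀ m ω, m ≤ W m ω := by
    intro m ω
    induction m with
    | zero => exact Nat.zero_le _
    | succ k ih =>
      have := hXpos (k + 1) ω
      rw [hWsucc]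
      omega
  have hTub : ∀ m ω, T m ω ≤ m := fun m ω => le_trans (hWge _ ω) (hT m ω).1
  have hWT1 : ∀ m ω, m < W (T m ω + 1) ω := by
    intro m ω
    by_contra h
    push_neg at h
    have := (hT m ω).2 _ h
    omega
  have hTdet : ∀ m t ω, W t ω ≤ m → m < W (t + 1) ω → T m ω = t := by
    intro m t ω h1 h2
    refine le_antisymm ?_ ((hT m ω).2 t h1)
    by_contra h
    push_neg at h
    have h3 : W (t + 1) ω ≤ W (T m ω) ω := (hWmono ω).monotone h
    have := (hT m ω).1
    omega
  have hmN : ∀ s : Set ℕ, MeasurableSet s := fun s => s.to_countable.measurableSet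
  -- abbreviations
  set B := ⌊(n : ℝ) / M⌋₊ with hB
  set L := {ω | ∀ i ∈ Finset.Icc 1 n, (X i ω : ℝ) ≤ (n : ℝ) / M} with hL
  set A := {ω | ∀ i ∈ Finset.Icc 1 (T n ω), ∀ i' ∈ Finset.Icc 1 (T n ω),
      ¬ (W i ω = R i' ω ∧ 1 ≤ W i ω ∧ 3 * W i ω ≤ n)} with hA
  set Ab := fun b => {ω | ∀ i ∈ Finset.Icc 1 (T (n - b) ω), ∀ i' ∈ Finset.Icc 1 (T (n - b) ω),
      ¬ (W i ω = b + W' b i' ω ∧ 1 ≤ W i ω ∧ 3 * W i ω ≤ n)} with hAb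
  set G : ℕ → ℕ → Set Ω := fun b t => {ω | gapCond M n b t fun i => X i ω} with hG
  set q : ℕ → ℝ≥0∞ := fun b => μ {ω | b + 1 ≤ X 1 ω} with hq
  set p : ℝ≥0∞ := μ {ω | (X 1 ω : ℝ) ≤ (n : ℝ) / M} with hp
  -- measurability and the independence product formula for `G b t`
  have hkey : ∀ b t, MeasurableSet (G b t) ∧
      ∀ s : Set ℕ, μ (G b t ∩ X (t + 1) ⁻¹' s) = μ (G b t) * μ (X 1 ⁻¹' s) := by
    intro b t
    set S : Finset ℕ := (Finset.Icc 1 (max t n)).erase (t + 1) with hS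
    have hdisj : Disjoint S ({t + 1} : Finset ℕ) := by
      rw [Finset.disjoint_singleton_right, hS]
      exact Finset.notMem_erase _ _
    have hindep := hXindep.indepFun_finset S {t + 1} hdisj hXmeas
    set F1 : Ω → (S → ℕ) := fun ω i => X i.1 ω with hF1
    set F2 : Ω → (({t + 1} : Finset ℕ) → ℕ) := fun ω i => X i.1 ω with hF2
    set Cs : Set (S → ℕ) :=
      {v | gapCond M n b t fun i => if h : i ∈ S then v ⟨i, h⟩ else 0} with hCs
    have hGeq : G b t = F1 ⁻¹' Cs := by
      ext ω
      simp only [hG, Set.mem_preimage, Set.mem_setOf_eq, hCs, hF1]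
      refine gapCond_congr M n b t fun i h1 h2 h3 => ?_
      have hiS : i ∈ S := by
        rw [hS, Finset.mem_erase, Finset.mem_Icc]
        exact ⟨h3, h1, h2⟩
      rw [dif_pos hiS]
    have hCmeas : MeasurableSet Cs := (Set.to_countable Cs).measurableSet
    have hF1meas : Measurable F1 := measurable_pi_lambda _ fun i => hXmeas i.1
    refine ⟨by rw [hGeq]; exact hF1meas hCmeas, fun s => ?_⟩
    have ht1 : (t + 1 : ℕ) ∈ ({t + 1} : Finset ℕ) := Finset.mem_singleton_self _
    have hpre : X (t + 1) ⁻¹' s = F2 ⁻¹' {v | v ⟨t + 1, ht1⟩ ∈ s} := rfl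
    rw [hGeq, hpre,
      indepFun_iff_measure_inter_preimage_eq_mul.mp hindep Cs _ hCmeas
        ((Set.to_countable _).measurableSet)]
    congr 1
    rw [← hpre]
    exact (hXid (t + 1)).measure_mem_eq (hmN s)
  -- disjointness in `t`
  have hGdisj : ∀ b (Z : ℕ → Set Ω),
      (↑(Finset.range (n + 1)) : Set ℕ).PairwiseDisjoint fun t => G b t ∩ Z t := by
    intro b Z t _ t' _ hne
    refine Set.disjoint_left.mpr fun ω h1 h2 => hne ?_
    have e1 : W t ω + b = n := by rw [hW]; exact h1.1.1
    have e2 : W t' ω + b = n := by rw [hW]; exact h2.1.1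
    exact (hWmono ω).injective (by omega)
  -- the cover
  have hcover : A ∩ L ⊆ ⋃ b ∈ Finset.range (B + 1), ⋃ t ∈ Finset.range (n + 1),
      G b t ∩ {ω | b + 1 ≤ X (t + 1) ω} := by
    rintro ω ⟨hωA, hωL⟩
    simp only [hA, Set.mem_setOf_eq] at hωA
    simp only [hL, Set.mem_setOf_eq] at hωL
    obtain ⟨t, htdef⟩ : ∃ t, t = T n ω := ⟨_, rfl⟩
    rw [← htdef] at hωA
    obtain ⟨b, hbdef⟩ : ∃ b, b = n - W t ω := ⟨_, rfl⟩
    have hWtn : W t ω ≤ n := by rw [htdef]; exact (hT n ω).1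
    have hbW : W t ω + b = n := by omega
    have hX1 : b + 1 ≤ X (t + 1) ω := by
      have h2 := hWT1 n ω
      rw [hWsucc, ← htdef] at h2
      omega
    have htn : t ≤ n := by rw [htdef]; exact hTub n ω
    have hbB : b ≤ B := by
      rcases eq_or_lt_of_le htn with heq | hlt
      · have h4 := hWge n ω
        rw [heq] at hbW
        omega
      · have hmem : t + 1 ∈ Finset.Icc 1 n := by rw [Finset.mem_Icc]; omega
        have hXle : (X (t + 1) ω : ℝ) ≤ (n : ℝ) / M := hωL _ hmem
        refine Nat.le_floor ?_
        have hcast : ((b : ℝ) + 1) ≤ (X (t + 1) ω : ℝ) := by exact_mod_cast hX1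
        linarith
    have hRval : ∀ i', i' ≤ t → R i' ω = b + ∑ j ∈ Finset.Ioc (t - i') t, X j ω := by
      intro i' hi't
      have h1 : ∑ j ∈ Finset.range i', X (t - j) ω = ∑ j ∈ Finset.Ioc (t - i') t, X j ω :=
        sum_range_sub_eq_sum_Ioc (fun j => X j ω) hi't
      rw [hR, ← htdef, h1]
      omega
    have hGmem : ω ∈ G b t ∩ {ω | b + 1 ≤ X (t + 1) ω} := by
      refine ⟨⟨?_, ?_, ?_⟩, hX1⟩
      · rw [← hW]; exact hbW
      · intro i hi i' hi'
        rintro ⟨he, h1, h3⟩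
        have hi't : i' ≤ t := (Finset.mem_Icc.mp hi').2
        refine hωA i hi i' hi' ⟨?_, ?_, ?_⟩
        · rw [hW, hRval i' hi't]; exact he
        · rw [hW]; exact h1
        · rw [hW]; exact h3
      · intro i hi _
        exact hωL i hi
    have hbmem : b ∈ Finset.range (B + 1) := Finset.mem_range.mpr (by omega)
    have htmem : t ∈ Finset.range (n + 1) := Finset.mem_range.mpr (by omega)
    exact Set.mem_biUnion hbmem (Set.mem_biUnion htmem hGmem)
  -- the inclusion `G b t ∩ {X (t+1) small} ⊆ Ab b ∩ L`
  have hsub : ∀ b t, G b t ∩ {ω | (X (t + 1) ω : ℝ) ≤ (n : ℝ) / M} ⊆ Ab b ∩ L := by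
    rintro b t ω ⟨⟨hg1, hg2, hg3⟩, hgx⟩
    have hWt : W t ω + b = n := by rw [hW]; exact hg1
    have hTnb : T (n - b) ω = t := by
      refine hTdet _ _ _ (by omega) ?_
      rw [hWsucc]
      have := hXpos (t + 1) ω
      omega
    constructor
    · intro i hi i' hi' ⟨he, h1, h3⟩
      rw [hTnb] at hi hi'
      have hi't : i' ≤ t := (Finset.mem_Icc.mp hi').2
      have hW'val : W' b i' ω = ∑ j ∈ Finset.Ioc (t - i') t, X j ω := by
        have hsplit : W (t - i') ω + ∑ j ∈ Finset.Ioc (t - i') t, X j ω = W t ω := by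
          rw [hW, hW]
          exact sum_Icc_split _ hi't
        rw [hW', hTnb]
        omega
      refine hg2 i hi i' hi' ⟨?_, by rw [← hW]; exact h1, by rw [← hW]; exact h3⟩
      rw [← hW'val, ← hW]
      exact he
    · intro i hi
      rcases eq_or_ne i (t + 1) with rfl | hne
      · exact hgx
      · exact hg3 i hi hne
  -- layer cake: `∑ q b ≤ E X`
  have hqE : ∑ b ∈ Finset.range (B + 1), q b
      ≤ ENNReal.ofReal (∫ ω, (X 1 ω : ℝ) ∂μ) := by
    have hmb : ∀ b : ℕ, MeasurableSet {ω | b + 1 ≤ X 1 ω} := fun b => hXmeas 1 (hmN _)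
    have h1 : ∀ b : ℕ, q b = ∫⁻ ω, Set.indicator {ω | b + 1 ≤ X 1 ω} 1 ω ∂μ :=
      fun b => (lintegral_indicator_one (hmb b)).symm
    calc ∑ b ∈ Finset.range (B + 1), q b
        = ∫⁻ ω, ∑ b ∈ Finset.range (B + 1),
            Set.indicator {ω | b + 1 ≤ X 1 ω} 1 ω ∂μ := by
          rw [lintegral_finset_sum]
          · exact Finset.sum_congr rfl fun b _ => h1 b
          · exact fun b _ => measurable_one.indicator (hmb b)
      _ ≤ ∫⁻ ω, (X 1 ω : ℝ≥0∞) ∂μ := by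
          refine lintegral_mono fun ω => ?_
          simp only [Set.indicator_apply, Set.mem_setOf_eq, Pi.one_apply]
          exact sum_ite_le _ _
      _ = ENNReal.ofReal (∫ ω, (X 1 ω : ℝ) ∂μ) := by
          rw [ofReal_integral_eq_lintegral_ofReal hXint
            (Filter.Eventually.of_forall fun ω => Nat.cast_nonneg _)]
          exact lintegral_congr fun ω => (ENNReal.ofReal_natCast _).symm
  -- `1 - p ≤ μ Lᶜ`
  have hpc : 1 - p ≤ μ Lᶜ := by
    have hsub' : {ω | (X 1 ω : ℝ) ≤ (n : ℝ) / M}ᶜ ⊆ Lᶜ := by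
      refine Set.compl_subset_compl.mpr fun ω hω => ?_
      exact hω 1 (Finset.mem_Icc.mpr ⟨le_rfl, hn⟩)
    have hm1 : MeasurableSet {ω | (X 1 ω : ℝ) ≤ (n : ℝ) / M} :=
      hXmeas 1 (hmN {k : ℕ | (k : ℝ) ≤ (n : ℝ) / M})
    calc 1 - p = μ {ω | (X 1 ω : ℝ) ≤ (n : ℝ) / M}ᶜ := by
          rw [hp, prob_compl_eq_one_sub hm1]
      _ ≤ μ Lᶜ := measure_mono hsub'
  have hple : p ≤ 1 := prob_le_one
  -- `V b := ∑ t μ (G b t)`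
  set V : ℕ → ℝ≥0∞ := fun b => ∑ t ∈ Finset.range (n + 1), μ (G b t) with hV
  have hVle1 : ∀ b, V b ≤ 1 := by
    intro b
    have hd := hGdisj b fun _ => Set.univ
    have heq := measure_biUnion_finset (μ := μ) hd
      (fun t _ => ((hkey b t).1.inter MeasurableSet.univ))
    calc V b = μ (⋃ t ∈ Finset.range (n + 1), G b t ∩ Set.univ) := by
          rw [heq]
          exact Finset.sum_congr rfl fun t _ => by rw [Set.inter_univ]
      _ ≤ 1 := prob_le_one
  -- main chain
  have h1 : μ (A ∩ L) ≤ ∑ b ∈ Finset.range (B + 1), q b * V b := by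
    calc μ (A ∩ L)
        ≤ μ (⋃ b ∈ Finset.range (B + 1), ⋃ t ∈ Finset.range (n + 1),
            G b t ∩ {ω | b + 1 ≤ X (t + 1) ω}) := measure_mono hcover
      _ ≤ ∑ b ∈ Finset.range (B + 1), μ (⋃ t ∈ Finset.range (n + 1),
            G b t ∩ {ω | b + 1 ≤ X (t + 1) ω}) := measure_biUnion_finset_le _ _
      _ ≤ ∑ b ∈ Finset.range (B + 1), ∑ t ∈ Finset.range (n + 1),
            μ (G b t ∩ {ω | b + 1 ≤ X (t + 1) ω}) :=
          Finset.sum_le_sum fun b _ => measure_biUnion_finset_le _ _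
      _ = ∑ b ∈ Finset.range (B + 1), q b * V b := by
          refine Finset.sum_congr rfl fun b _ => ?_
          rw [hV, Finset.mul_sum]
          refine Finset.sum_congr rfl fun t _ => ?_
          have he : μ (G b t ∩ {ω | b + 1 ≤ X (t + 1) ω}) = μ (G b t) * q b :=
            (hkey b t).2 {k | b + 1 ≤ k}
          rw [he, mul_comm]
  have h2 : ∀ b ∈ Finset.range (B + 1), p * V b ≤ μ (Ab b ∩ L) := by
    intro b _
    have heq : p * V b = ∑ t ∈ Finset.range (n + 1),
        μ (G b t ∩ {ω | (X (t + 1) ω : ℝ) ≤ (n : ℝ) / M}) := by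
      rw [hV, Finset.mul_sum]
      refine Finset.sum_congr rfl fun t _ => ?_
      have he : μ (G b t ∩ {ω | (X (t + 1) ω : ℝ) ≤ (n : ℝ) / M}) = μ (G b t) * p :=
        (hkey b t).2 {k : ℕ | (k : ℝ) ≤ (n : ℝ) / M}
      rw [he, mul_comm]
    have hm : ∀ t ∈ Finset.range (n + 1),
        MeasurableSet (G b t ∩ {ω | (X (t + 1) ω : ℝ) ≤ (n : ℝ) / M}) :=
      fun t _ => (hkey b t).1.inter (hXmeas (t + 1) (hmN {k : ℕ | (k : ℝ) ≤ (n : ℝ) / M}))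
    rw [heq, ← measure_biUnion_finset (hGdisj b _) hm]
    exact measure_mono (Set.iUnion₂_subset fun t _ => hsub b t)
  -- assemble
  have hmain : μ A ≤ μ Lᶜ + ∑ b ∈ Finset.range (B + 1), q b * V b := by
    calc μ A ≤ μ ((A ∩ L) ∪ Lᶜ) := by
          refine measure_mono fun ω hω => ?_
          by_cases hωL : ω ∈ L
          · exact Or.inl ⟨hω, hωL⟩
          · exact Or.inr hωL
      _ ≤ μ (A ∩ L) + μ Lᶜ := measure_union_le _ _
      _ ≤ ∑ b ∈ Finset.range (B + 1), q b * V b + μ Lᶜ := add_le_add_left h1 _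
      _ = μ Lᶜ + ∑ b ∈ Finset.range (B + 1), q b * V b := add_comm _ _
  have hsplit : ∑ b ∈ Finset.range (B + 1), q b * V b
      ≤ μ Lᶜ * ENNReal.ofReal (∫ ω, (X 1 ω : ℝ) ∂μ)
        + ∑ b ∈ Finset.range (B + 1), q b * μ (Ab b ∩ L) := by
    have hone : (1 - p) + p = 1 := tsub_add_cancel_of_le hple
    calc ∑ b ∈ Finset.range (B + 1), q b * V b
        = ∑ b ∈ Finset.range (B + 1), (q b * ((1 - p) * V b) + q b * (p * V b)) := by
          refine Finset.sum_congr rfl fun b _ => ?_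
          rw [← mul_add, ← add_mul, hone, one_mul]
      _ ≤ ∑ b ∈ Finset.range (B + 1), (q b * (1 - p) + q b * μ (Ab b ∩ L)) := by
          refine Finset.sum_le_sum fun b hb => add_le_add ?_ ?_
          · calc q b * ((1 - p) * V b) ≤ q b * ((1 - p) * 1) :=
                mul_le_mul_right (mul_le_mul_right (hVle1 b) _) _
              _ = q b * (1 - p) := by rw [mul_one]
          · exact mul_le_mul_right (h2 b hb) _
      _ = (∑ b ∈ Finset.range (B + 1), q b) * (1 - p)
            + ∑ b ∈ Finset.range (B + 1), q b * μ (Ab b ∩ L) := by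
          rw [Finset.sum_add_distrib, Finset.sum_mul]
      _ ≤ μ Lᶜ * ENNReal.ofReal (∫ ω, (X 1 ω : ℝ) ∂μ)
            + ∑ b ∈ Finset.range (B + 1), q b * μ (Ab b ∩ L) := by
          refine add_le_add_left ?_ _
          calc (∑ b ∈ Finset.range (B + 1), q b) * (1 - p)
              ≤ ENNReal.ofReal (∫ ω, (X 1 ω : ℝ) ∂μ) * μ Lᶜ := mul_le_mul' hqE hpc
            _ = μ Lᶜ * ENNReal.ofReal (∫ ω, (X 1 ω : ℝ) ∂μ) := mul_comm _ _
  have hofreal : ENNReal.ofReal ((∫ ω, (X 1 ω : ℝ) ∂μ) + 1)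
      = ENNReal.ofReal (∫ ω, (X 1 ω : ℝ) ∂μ) + 1 := by
    rw [ENNReal.ofReal_add (integral_nonneg fun ω => Nat.cast_nonneg _) zero_le_one,
      ENNReal.ofReal_one]
  calc μ A ≤ μ Lᶜ + ∑ b ∈ Finset.range (B + 1), q b * V b := hmain
    _ ≤ μ Lᶜ + (μ Lᶜ * ENNReal.ofReal (∫ ω, (X 1 ω : ℝ) ∂μ)
          + ∑ b ∈ Finset.range (B + 1), q b * μ (Ab b ∩ L)) := add_le_add_right hsplit _
    _ = ENNReal.ofReal ((∫ ω, (X 1 ω : ℝ) ∂μ) + 1) * μ Lᶜ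
          + ∑ b ∈ Finset.range (B + 1), q b * μ (Ab b ∩ L) := by
        rw [hofreal, add_mul, one_mul, mul_comm]
        ring
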